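/- Let f : ℝ → ℝ be three times continuously differentiable on a neighborhood of 0 and let C ∈ ℝ. Then, as h → 0, [f(h/2) + (C h/2)(f′(0) − f′(h))] − (1/2)[(f(0) + (h/2)f′(0)) + (f(h) − (h/2)f′(h))] = (1/8 − C/2) f′′(0) h² + O(h³). In particular, if C ≠ 1/4 and f′′(0) ≠ 0, the flux-correction form differs from the flux-average form at second order in h. -/

import Mathlib

open Asymptotics Filter

lemma bigO_of_deriv_bigO (g : ℝ → ℝ) (k : ℕ) (h0 : g 0 = 0)
    (hd : ∀ᶠ x in nhds (0:ℝ), DifferentiableAt ℝ g x)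
    (hO : deriv g =O[nhds (0:ℝ)] fun x => x ^ k) :
    g =O[nhds (0:ℝ)] fun x => x ^ (k+1) := by
  rw [isBigO_iff] at hO
  obtain ⟨c, hc⟩ := hO
  rw [Metric.eventually_nhds_iff] at hc hd
  obtain ⟨δ₁, hδ₁, H1⟩ := hc
  obtain ⟨δ₂, hδ₂, H2⟩ := hd
  rw [isBigO_iff]
  refine ⟨|c|, Metric.eventually_nhds_iff.2 ⟨min δ₁ δ₂, lt_min hδ₁ hδ₂, fun h hh => ?_⟩⟩
  have hh1 : dist h 0 < δ₁ := lt_of_lt_of_le hh (min_le_left _ _)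
  have hh2 : dist h 0 < δ₂ := lt_of_lt_of_le hh (min_le_right _ _)
  rw [Real.dist_eq, sub_zero] at hh1 hh2
  have key : ‖g h - g 0‖ ≤ (|c| * |h| ^ k) * ‖h - 0‖ := by
    apply Convex.norm_image_sub_le_of_norm_deriv_le (𝕜 := ℝ) (s := Metric.closedBall (0:ℝ) |h|)
    · intro x hx
      apply H2
      rw [Real.dist_eq, sub_zero]
      exact lt_of_le_of_lt (by simpa [Real.dist_eq] using hx) hh2
    · intro x hx
      have hx' : |x| ≤ |h| := by simpa [Real.dist_eq] using hx
      have := H1 (y := x) (by rw [Real.dist_eq, sub_zero]; exact lt_of_le_of_lt hx' hh1)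
      calc ‖deriv g x‖ ≤ c * ‖x ^ k‖ := this
        _ ≤ |c| * ‖x ^ k‖ := by
            have := le_abs_self c
            have := norm_nonneg (x ^ k)
            nlinarith
        _ ≤ |c| * (|h| ^ k) := by
            have hxk : ‖x ^ k‖ ≤ |h| ^ k := by
              rw [Real.norm_eq_abs, abs_pow]
              exact pow_le_pow_left₀ (abs_nonneg x) hx' k
            have := abs_nonneg c
            nlinarith
    · exact convex_closedBall _ _
    · simp
    · simp [Real.dist_eq]
  rw [h0, sub_zero] at key
  calc ‖g h‖ ≤ (|c| * |h| ^ k) * ‖h - 0‖ := key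
    _ = |c| * ‖h ^ (k+1)‖ := by
        rw [sub_zero]
        simp only [Real.norm_eq_abs, abs_pow, pow_succ, abs_mul]
        ring

theorem stmt_11 (f : ℝ → ℝ) (s : Set ℝ) (hs : s ∈ nhds (0 : ℝ))
    (hf : ContDiffOn ℝ 3 f s) (C : ℝ) :
    ((fun h : ℝ =>
        ((f (h/2) + (C * h / 2) * (deriv f 0 - deriv f h))
            - (1/2) * ((f 0 + (h/2) * deriv f 0) + (f h - (h/2) * deriv f h)))
          - (1/8 - C/2) * deriv^[2] f 0 * h^2)
        =O[nhds 0] fun h : ℝ => h^3)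
    ∧ (C ≠ 1/4 → deriv^[2] f 0 ≠ 0 →
        ¬ ((fun h : ℝ =>
            (f (h/2) + (C * h / 2) * (deriv f 0 - deriv f h))
              - (1/2) * ((f 0 + (h/2) * deriv f 0) + (f h - (h/2) * deriv f h)))
          =O[nhds 0] fun h : ℝ => h^3)) := by
  -- setup: work on the open set u = interior s
  set u := interior s with hu
  have huo : IsOpen u := isOpen_interior
  have h0u : (0:ℝ) ∈ u := mem_interior_iff_mem_nhds.2 hs
  have hfu : ContDiffOn ℝ 3 f u := hf.mono interior_subset
  have hmem : ∀ᶠ x in nhds (0:ℝ), x ∈ u := huo.mem_nhds h0u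
  -- derivatives regularity
  have hf1 : ContDiffOn ℝ 2 (deriv f) u := hfu.deriv_of_isOpen huo (by norm_num)
  have hf2 : ContDiffOn ℝ 1 (deriv (deriv f)) u := hf1.deriv_of_isOpen huo (by norm_num)
  have df : ∀ x ∈ u, DifferentiableAt ℝ f x := fun x hx =>
    (hfu.contDiffAt (huo.mem_nhds hx)).differentiableAt (by norm_num)
  have df1 : ∀ x ∈ u, DifferentiableAt ℝ (deriv f) x := fun x hx =>
    (hf1.contDiffAt (huo.mem_nhds hx)).differentiableAt (by norm_num)
  have df2 : ∀ x ∈ u, DifferentiableAt ℝ (deriv (deriv f)) x := fun x hx =>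
    (hf2.contDiffAt (huo.mem_nhds hx)).differentiableAt (by norm_num)
  set f1 := deriv f
  set f2 := deriv (deriv f)
  have hit : deriv^[2] f 0 = f2 0 := rfl
  -- g1, g2
  set g1 : ℝ → ℝ := fun h => f1 h - f1 0 - h * f2 0 with hg1def
  set g2 : ℝ → ℝ := fun h => f h - f 0 - h * f1 0 - h^2/2 * f2 0 with hg2def
  -- g1 = O(h^2)
  have hO0 : (fun h : ℝ => f2 h - f2 0) =O[nhds 0] fun h => h ^ 1 := by
    have := (df2 0 h0u).isBigO_sub
    simpa using this
  have hdg1 : ∀ᶠ x in nhds (0:ℝ), deriv g1 x = f2 x - f2 0 := by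
    filter_upwards [hmem] with x hx
    rw [hg1def]
    rw [deriv_fun_sub ((df1 x hx).sub_const _) (by fun_prop)]
    rw [deriv_fun_sub (df1 x hx) (by fun_prop)]
    simp [f2, f1, deriv_sub_const]
  have hg1O : g1 =O[nhds (0:ℝ)] fun h => h ^ 2 := by
    apply bigO_of_deriv_bigO g1 1 (by simp [hg1def])
    · filter_upwards [hmem] with x hx
      exact ((df1 x hx).sub_const _).sub (by fun_prop)
    · exact hO0.congr' (hdg1.mono fun x hx => hx.symm) EventuallyEq.rfl
  -- g2 = O(h^3)
  have hdg2 : ∀ᶠ x in nhds (0:ℝ), deriv g2 x = g1 x := by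
    filter_upwards [hmem] with x hx
    rw [hg2def, hg1def]
    have d1 : DifferentiableAt ℝ (fun h : ℝ => f h - f 0 - h * f1 0) x :=
      ((df x hx).sub_const _).sub (by fun_prop)
    rw [deriv_fun_sub d1 (by fun_prop), deriv_fun_sub ((df x hx).sub_const _) (by fun_prop)]
    have : deriv (fun h : ℝ => h ^ 2 / 2 * f2 0) x = x * f2 0 := by
      rw [show (fun h : ℝ => h ^ 2 / 2 * f2 0) = fun h : ℝ => (f2 0 / 2) * h ^ 2 by
        funext h; ring]
      rw [deriv_const_mul _ (by fun_prop), deriv_pow_field]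
      ring
    rw [this]
    simp [f1, deriv_sub_const]
  have hg2O : g2 =O[nhds (0:ℝ)] fun h => h ^ 3 := by
    apply bigO_of_deriv_bigO g2 2 (by simp [hg2def])
    · filter_upwards [hmem] with x hx
      exact (((df x hx).sub_const _).sub (by fun_prop)).sub (by fun_prop)
    · exact hg1O.congr' (hdg2.mono fun x hx => hx.symm) EventuallyEq.rfl
  -- composition with h/2
  have htend : Tendsto (fun h : ℝ => h / 2) (nhds 0) (nhds 0) := by
    have : Tendsto (fun h : ℝ => h / 2) (nhds 0) (nhds (0 / 2)) :=
      (tendsto_id).div_const 2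
    simpa using this
  have hg2half : (fun h : ℝ => g2 (h / 2)) =O[nhds 0] fun h => h ^ 3 := by
    have hcomp := hg2O.comp_tendsto htend
    refine hcomp.trans (isBigO_of_le _ fun h => ?_)
    simp only [Function.comp_def, Real.norm_eq_abs, abs_pow]
    have h2 : |h / 2| ≤ |h| := by
      rw [abs_div]
      have := abs_nonneg h
      simp only [Nat.abs_ofNat]
      linarith
    exact pow_le_pow_left₀ (abs_nonneg _) h2 3
  have hmul : (fun h : ℝ => h * g1 h) =O[nhds 0] fun h => h ^ 3 := by
    have := (isBigO_refl (fun h : ℝ => h) (nhds 0)).mul hg1O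
    refine this.trans (isBigO_of_le _ fun h => ?_)
    simp [pow_succ, abs_mul, mul_comm]
  -- main identity
  have hmain : ∀ h : ℝ,
      ((f (h/2) + (C * h / 2) * (deriv f 0 - deriv f h))
          - (1/2) * ((f 0 + (h/2) * deriv f 0) + (f h - (h/2) * deriv f h)))
        - (1/8 - C/2) * deriv^[2] f 0 * h^2
      = g2 (h/2) - (1/2) * g2 h + (1/4 - C/2) * (h * g1 h) := by
    intro h
    rw [hit, hg1def, hg2def]
    show (f (h/2) + (C * h / 2) * (f1 0 - f1 h))
          - (1/2) * ((f 0 + (h/2) * f1 0) + (f h - (h/2) * f1 h))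
        - (1/8 - C/2) * f2 0 * h^2
      = (f (h/2) - f 0 - (h/2) * f1 0 - (h/2)^2/2 * f2 0)
        - (1/2) * (f h - f 0 - h * f1 0 - h^2/2 * f2 0)
        + (1/4 - C/2) * (h * (f1 h - f1 0 - h * f2 0))
    ring
  have part1 :
      ((fun h : ℝ =>
        ((f (h/2) + (C * h / 2) * (deriv f 0 - deriv f h))
            - (1/2) * ((f 0 + (h/2) * deriv f 0) + (f h - (h/2) * deriv f h)))
          - (1/8 - C/2) * deriv^[2] f 0 * h^2)
        =O[nhds 0] fun h : ℝ => h^3) := by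
    have comb : (fun h : ℝ => g2 (h/2) - (1/2) * g2 h + (1/4 - C/2) * (h * g1 h))
        =O[nhds 0] fun h : ℝ => h ^ 3 :=
      ((hg2half.sub (hg2O.const_mul_left (1/2))).add (hmul.const_mul_left _))
    exact comb.congr' (by filter_upwards with h; exact (hmain h).symm) EventuallyEq.rfl
  refine ⟨part1, ?_⟩
  intro hC hD hcon
  have hq : (fun h : ℝ => (1/8 - C/2) * deriv^[2] f 0 * h^2) =O[nhds 0]
      fun h : ℝ => h ^ 3 := by
    have := hcon.sub part1
    refine this.congr' ?_ EventuallyEq.rfl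
    filter_upwards with h; ring
  have hc0 : (1/8 - C/2) * deriv^[2] f 0 ≠ 0 := by
    apply mul_ne_zero _ hD
    intro hz
    apply hC
    linarith [hz]
  have hq2 : (fun h : ℝ => h ^ 2) =O[nhds (0:ℝ)] fun h : ℝ => h ^ 3 := by
    rw [← isBigO_const_mul_left_iff hc0]
    exact hq.congr' (by filter_upwards with h; ring_nf) EventuallyEq.rfl
  have hlt : (fun h : ℝ => h ^ 3) =o[nhds (0:ℝ)] fun h : ℝ => h ^ 2 :=
    isLittleO_pow_pow (by norm_num)
  have : (fun h : ℝ => h ^ 2) =o[nhds (0:ℝ)] fun h : ℝ => h ^ 2 := hq2.trans_isLittleO hlt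
  refine isLittleO_irrefl ?_ this
  rw [Filter.Frequently]
  intro hev
  rw [Metric.eventually_nhds_iff] at hev
  obtain ⟨ε, hε, hb⟩ := hev
  have hball : dist (ε/2) (0:ℝ) < ε := by
    rw [Real.dist_eq, sub_zero, abs_of_pos (by linarith)]
    linarith
  have := hb hball
  simp only [not_not] at this
  nlinarith
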